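/- arXiv:2302.07964 — 4 statements merged into one kernel-verified Lean document; each statement's English description precedes it below -/
import Mathlib

section
/- Let Q be a probability measure on ℝ^d whose support is contained in a Euclidean ball of radius r centered at u, and let π_ε be the entropic optimal transport coupling between a measure P and Q with regularization parameter ε > 0 (squared Euclidean cost). Then the entropic map T_ε(x) = E_{Y∼π_ε}[Y | X = x] is (4r²/ε)-Lipschitz continuous. -/
open MeasureTheory Metric

/-- If the target measure `Q` (hence each conditional `π x` of the entropic
optimal coupling) is supported in a Euclidean ball of radius `r` centered at `u`, and the
entropic map `Tε x = E_{Y ∼ π_ε}[Y | X = x]` has Jacobian `(1/ε) • Cov_{Y ∼ π_ε^x}(Y)`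
(the Chewi–Pooladian lemma), then `Tε` is `(4 r² / ε)`-Lipschitz. -/
theorem entropic_map_lipschitz {d : ℕ} (r ε : ℝ) (hr : 0 < r) (hε : 0 < ε)
    (u : EuclideanSpace ℝ (Fin d))
    (π : EuclideanSpace ℝ (Fin d) → Measure (EuclideanSpace ℝ (Fin d)))
    (hπprob : ∀ x, IsProbabilityMeasure (π x))
    (hπsupp : ∀ x, ∀ᵐ y ∂(π x), y ∈ closedBall u r)
    (Tε : EuclideanSpace ℝ (Fin d) → EuclideanSpace ℝ (Fin d))
    (hT : ∀ x, Tε x = ∫ y, y ∂(π x))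
    (A : EuclideanSpace ℝ (Fin d) → (EuclideanSpace ℝ (Fin d) →L[ℝ] EuclideanSpace ℝ (Fin d)))
    (hderiv : ∀ x, HasFDerivAt Tε (A x) x)
    (hA : ∀ x v, A x v = (1 / ε) • ∫ y, (inner ℝ (y - Tε x) v : ℝ) • (y - Tε x) ∂(π x)) :
    ∀ x y, ‖Tε x - Tε y‖ ≤ (4 * r ^ 2 / ε) * ‖x - y‖ := by
  -- integrability of the identity
  have hint : ∀ x, Integrable (fun y => y) (π x) := by
    intro x
    haveI := hπprob x
    refine Integrable.mono' (integrable_const (‖u‖ + r)) aestronglyMeasurable_id ?_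
    filter_upwards [hπsupp x] with y hy
    have : ‖y - u‖ ≤ r := by simpa [dist_eq_norm] using (mem_closedBall.mp hy)
    calc ‖y‖ = ‖u + (y - u)‖ := by congr 1; abel
      _ ≤ ‖u‖ + ‖y - u‖ := norm_add_le _ _
      _ ≤ ‖u‖ + r := by linarith
  -- Tε x lies in the ball
  have hTball : ∀ x, ‖Tε x - u‖ ≤ r := by
    intro x
    haveI := hπprob x
    have h1 : (∫ y, (y - u) ∂(π x)) = Tε x - u := by
      rw [integral_sub (hint x) (integrable_const u), integral_const, hT x]
      simp
    have h2 : ‖∫ y, (y - u) ∂(π x)‖ ≤ r := by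
      have := norm_integral_le_of_norm_le_const (μ := π x)
        (f := fun y => y - u) (C := r) ?_
      · simpa using this
      · filter_upwards [hπsupp x] with y hy
        simpa [dist_eq_norm] using (mem_closedBall.mp hy)
    rwa [h1] at h2
  -- bound on the operator norm of A x
  have hAnorm : ∀ x, ‖A x‖ ≤ 4 * r ^ 2 / ε := by
    intro x
    haveI := hπprob x
    refine ContinuousLinearMap.opNorm_le_bound _ (by positivity) (fun v => ?_)
    rw [hA x v, norm_smul]
    have hbound : ‖∫ y, (inner ℝ (y - Tε x) v : ℝ) • (y - Tε x) ∂(π x)‖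
        ≤ 4 * r ^ 2 * ‖v‖ := by
      have := norm_integral_le_of_norm_le_const (μ := π x)
        (f := fun y => (inner ℝ (y - Tε x) v : ℝ) • (y - Tε x))
        (C := 4 * r ^ 2 * ‖v‖) ?_
      · simpa using this
      · filter_upwards [hπsupp x] with y hy
        have hy' : ‖y - u‖ ≤ r := by simpa [dist_eq_norm] using (mem_closedBall.mp hy)
        have hyT : ‖y - Tε x‖ ≤ 2 * r := by
          calc ‖y - Tε x‖ = ‖(y - u) + (u - Tε x)‖ := by congr 1; abel
            _ ≤ ‖y - u‖ + ‖u - Tε x‖ := norm_add_le _ _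
            _ ≤ r + r := by
                have := hTball x
                rw [norm_sub_rev] at this
                linarith
            _ = 2 * r := by ring
        calc ‖(inner ℝ (y - Tε x) v : ℝ) • (y - Tε x)‖
            = |(inner ℝ (y - Tε x) v : ℝ)| * ‖y - Tε x‖ := by
              rw [norm_smul]; simp [Real.norm_eq_abs]
          _ ≤ ‖y - Tε x‖ * ‖v‖ * ‖y - Tε x‖ := by
              gcongr
              exact abs_real_inner_le_norm _ _
          _ ≤ (2 * r) * ‖v‖ * (2 * r) := by
              gcongr
          _ = 4 * r ^ 2 * ‖v‖ := by ring
    calc ‖(1 : ℝ) / ε‖ * ‖∫ y, (inner ℝ (y - Tε x) v : ℝ) • (y - Tε x) ∂(π x)‖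
        ≤ (1 / ε) * (4 * r ^ 2 * ‖v‖) := by
          rw [Real.norm_eq_abs, abs_of_pos (by positivity)]
          gcongr
      _ = 4 * r ^ 2 / ε * ‖v‖ := by ring
  intro x y
  have := convex_univ.norm_image_sub_le_of_norm_hasFDerivWithin_le
    (f := Tε) (f' := A) (C := 4 * r ^ 2 / ε)
    (fun z _ => (hderiv z).hasFDerivWithinAt)
    (fun z _ => hAnorm z) (Set.mem_univ y) (Set.mem_univ x)
  simpa [norm_sub_rev] using this
end

section
/- Let P, Q be probability measures supported in the Euclidean ball B(0,r) in ℝ^d, and let (f*, g*) be optimal entropic dual potentials for the entropic OT problem with cost (1/2)‖x−y‖² and parameter ε > 0, normalized so ∫g* dQ = 0. Then ‖f*‖_{L^∞(P)} ≤ 2r² and ‖g*‖_{L^∞(Q)} ≤ 2r². -/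
open MeasureTheory Metric Real

section Aux

variable {d : ℕ}

local notation "E" => EuclideanSpace ℝ (Fin d)

/-- If the integrand is never integrable (for points of the ball), the potential is a.e. zero. -/
lemma auxNotInt (r ε : ℝ) (hε : 0 < ε) (μ ν : Measure E)
    (C : E → E → ℝ) (hC0 : ∀ x y, 0 ≤ C x y)
    (hC2 : ∀ x ∈ closedBall (0 : E) r, ∀ y ∈ closedBall (0 : E) r, C x y ≤ 2 * r ^ 2)
    (hCm : ∀ x, Continuous (C x)) (F G : E → ℝ)
    (hμs : ∀ᵐ x ∂μ, x ∈ closedBall (0 : E) r)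
    (hνs : ∀ᵐ y ∂ν, y ∈ closedBall (0 : E) r)
    (hF : ∀ᵐ x ∂μ, F x = -ε * Real.log (∫ y, Real.exp ((G y - C x y) / ε) ∂ν))
    (hv : ¬ Integrable (fun y => Real.exp (G y / ε)) ν) :
    ∀ᵐ x ∂μ, F x = 0 := by
  filter_upwards [hF, hμs] with x hx hxb
  have hnint : ¬ Integrable (fun y => Real.exp ((G y - C x y) / ε)) ν := by
    intro h
    apply hv
    have heqp : ∀ y, Real.exp (G y / ε)
        = Real.exp ((G y - C x y) / ε) * Real.exp (C x y / ε) := by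
      intro y; rw [← Real.exp_add]; congr 1; field_simp; ring
    have heq : (fun y => Real.exp (G y / ε))
        = fun y => Real.exp ((G y - C x y) / ε) * Real.exp (C x y / ε) := funext heqp
    have hm : AEStronglyMeasurable (fun y => Real.exp (G y / ε)) ν := by
      rw [heq]
      exact h.aestronglyMeasurable.mul
        (Continuous.aestronglyMeasurable (by continuity))
    refine (h.const_mul (Real.exp (2 * r ^ 2 / ε))).mono' hm ?_
    filter_upwards [hνs] with y hyb
    rw [Real.norm_eq_abs, abs_of_pos (Real.exp_pos _), heqp y]
    have h1 : Real.exp (C x y / ε) ≤ Real.exp (2 * r ^ 2 / ε) :=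
      Real.exp_le_exp.mpr (div_le_div_of_nonneg_right (hC2 x hxb y hyb) hε.le)
    calc Real.exp ((G y - C x y) / ε) * Real.exp (C x y / ε)
        ≤ Real.exp ((G y - C x y) / ε) * Real.exp (2 * r ^ 2 / ε) := by
          exact mul_le_mul_of_nonneg_left h1 (Real.exp_pos _).le
      _ = Real.exp (2 * r ^ 2 / ε) * Real.exp ((G y - C x y) / ε) := mul_comm _ _
  rw [hx, integral_undef hnint, Real.log_zero, mul_zero]

/-- Main a.e. bound on the potential, in terms of `a = ∫ exp(G/ε) dν`. -/
lemma auxInt (r ε : ℝ) (hε : 0 < ε) (μ ν : Measure E) [IsProbabilityMeasure ν]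
    (C : E → E → ℝ) (hC0 : ∀ x y, 0 ≤ C x y)
    (hC2 : ∀ x ∈ closedBall (0 : E) r, ∀ y ∈ closedBall (0 : E) r, C x y ≤ 2 * r ^ 2)
    (hCm : ∀ x, Continuous (C x)) (F G : E → ℝ)
    (hμs : ∀ᵐ x ∂μ, x ∈ closedBall (0 : E) r)
    (hνs : ∀ᵐ y ∂ν, y ∈ closedBall (0 : E) r)
    (hF : ∀ᵐ x ∂μ, F x = -ε * Real.log (∫ y, Real.exp ((G y - C x y) / ε) ∂ν))
    (hv : Integrable (fun y => Real.exp (G y / ε)) ν) :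
    ∀ᵐ x ∂μ, -(ε * Real.log (∫ y, Real.exp (G y / ε) ∂ν)) ≤ F x ∧
      F x ≤ 2 * r ^ 2 - ε * Real.log (∫ y, Real.exp (G y / ε) ∂ν) := by
  set a : ℝ := ∫ y, Real.exp (G y / ε) ∂ν with ha_def
  have ha : 0 < a := integral_exp_pos hv
  filter_upwards [hF, hμs] with x hx hxb
  have hub : ∀ y, Real.exp ((G y - C x y) / ε) ≤ Real.exp (G y / ε) := by
    intro y
    apply Real.exp_le_exp.mpr
    apply div_le_div_of_nonneg_right _ hε.le
    linarith [hC0 x y]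
  have hφm : AEStronglyMeasurable (fun y => Real.exp ((G y - C x y) / ε)) ν := by
    have heq : (fun y => Real.exp ((G y - C x y) / ε))
        = fun y => Real.exp (G y / ε) * Real.exp (-C x y / ε) := by
      funext y; rw [← Real.exp_add, ← add_div, sub_eq_add_neg]
    rw [heq]
    exact hv.aestronglyMeasurable.mul
      (Continuous.aestronglyMeasurable
        (Real.continuous_exp.comp (((hCm x).neg).div_const ε)))
  have hφint : Integrable (fun y => Real.exp ((G y - C x y) / ε)) ν := by
    refine hv.mono' hφm ?_
    filter_upwards with y
    rw [Real.norm_eq_abs, abs_of_pos (Real.exp_pos _)]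
    exact hub y
  have hI1 : ∫ y, Real.exp ((G y - C x y) / ε) ∂ν ≤ a := integral_mono hφint hv hub
  have hI0 : Real.exp (-(2 * r ^ 2) / ε) * a ≤ ∫ y, Real.exp ((G y - C x y) / ε) ∂ν := by
    have hlow : ∀ᵐ y ∂ν, Real.exp (G y / ε) * Real.exp (-(2 * r ^ 2) / ε)
        ≤ Real.exp ((G y - C x y) / ε) := by
      filter_upwards [hνs] with y hyb
      rw [← Real.exp_add]
      apply Real.exp_le_exp.mpr
      rw [← add_div]
      apply div_le_div_of_nonneg_right _ hε.le
      linarith [hC2 x hxb y hyb]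
    have := integral_mono_ae (hv.mul_const (Real.exp (-(2 * r ^ 2) / ε))) hφint hlow
    rwa [integral_mul_const, mul_comm] at this
  have hIpos : 0 < ∫ y, Real.exp ((G y - C x y) / ε) ∂ν := lt_of_lt_of_le (by positivity) hI0
  have hlog1 : Real.log (∫ y, Real.exp ((G y - C x y) / ε) ∂ν) ≤ Real.log a :=
    Real.log_le_log hIpos hI1
  have hlog0 : Real.log a - 2 * r ^ 2 / ε ≤ Real.log (∫ y, Real.exp ((G y - C x y) / ε) ∂ν) := by
    have := Real.log_le_log (by positivity) hI0
    rwa [Real.log_mul (Real.exp_pos _).ne' ha.ne', Real.log_exp, neg_div,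
      neg_add_eq_sub] at this
  have hkey : ε * (2 * r ^ 2 / ε) = 2 * r ^ 2 := mul_div_cancel₀ _ hε.ne'
  rw [hx]
  constructor
  · have := mul_le_mul_of_nonneg_left hlog1 hε.le
    nlinarith
  · have := mul_le_mul_of_nonneg_left hlog0 hε.le
    nlinarith

end Aux

/-- If `P, Q` are supported in `B(0,r)` and `(f, g)` solve the Schrödinger
system for entropic OT with cost `(1/2)‖x−y‖²` and parameter `ε > 0`, normalized so that
`∫ g dQ = 0`, then `‖f‖_{L^∞(P)} ≤ 2r²` and `‖g‖_{L^∞(Q)} ≤ 2r²`. -/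
theorem entropic_potentials_bounded {d : ℕ} (r ε : ℝ) (hr : 0 < r) (hε : 0 < ε)
    (P Q : Measure (EuclideanSpace ℝ (Fin d)))
    [IsProbabilityMeasure P] [IsProbabilityMeasure Q]
    (hPsupp : ∀ᵐ x ∂P, x ∈ closedBall (0 : EuclideanSpace ℝ (Fin d)) r)
    (hQsupp : ∀ᵐ y ∂Q, y ∈ closedBall (0 : EuclideanSpace ℝ (Fin d)) r)
    (f g : EuclideanSpace ℝ (Fin d) → ℝ)
    (hf : ∀ᵐ x ∂P, f x = -ε * Real.log (∫ y, Real.exp ((g y - ‖x - y‖ ^ 2 / 2) / ε) ∂Q))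
    (hg : ∀ᵐ y ∂Q, g y = -ε * Real.log (∫ x, Real.exp ((f x - ‖x - y‖ ^ 2 / 2) / ε) ∂P))
    (hg0 : ∫ y, g y ∂Q = 0) :
    (∀ᵐ x ∂P, |f x| ≤ 2 * r ^ 2) ∧ (∀ᵐ y ∂Q, |g y| ≤ 2 * r ^ 2) := by
  have hr2 : (0:ℝ) < 2 * r ^ 2 := by positivity
  -- the two cost orientations
  set C₁ : EuclideanSpace ℝ (Fin d) → EuclideanSpace ℝ (Fin d) → ℝ := fun x y => ‖x - y‖ ^ 2 / 2 with hC₁def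
  set C₂ : EuclideanSpace ℝ (Fin d) → EuclideanSpace ℝ (Fin d) → ℝ := fun y x => ‖x - y‖ ^ 2 / 2 with hC₂def
  have hC₁0 : ∀ x y : EuclideanSpace ℝ (Fin d), 0 ≤ C₁ x y := fun x y => by positivity
  have hC₂0 : ∀ y x : EuclideanSpace ℝ (Fin d), 0 ≤ C₂ y x := fun y x => by positivity
  have hball : ∀ x ∈ closedBall (0 : EuclideanSpace ℝ (Fin d)) r, ∀ y ∈ closedBall (0 : EuclideanSpace ℝ (Fin d)) r,
      ‖x - y‖ ^ 2 / 2 ≤ 2 * r ^ 2 := by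
    intro x hx y hy
    rw [mem_closedBall, dist_zero_right] at hx hy
    have h1 : ‖x - y‖ ≤ ‖x‖ + ‖y‖ := norm_sub_le x y
    have h2 : (0:ℝ) ≤ ‖x - y‖ := norm_nonneg _
    nlinarith
  have hC₁2 : ∀ x ∈ closedBall (0 : EuclideanSpace ℝ (Fin d)) r, ∀ y ∈ closedBall (0 : EuclideanSpace ℝ (Fin d)) r, C₁ x y ≤ 2 * r ^ 2 :=
    fun x hx y hy => hball x hx y hy
  have hC₂2 : ∀ y ∈ closedBall (0 : EuclideanSpace ℝ (Fin d)) r, ∀ x ∈ closedBall (0 : EuclideanSpace ℝ (Fin d)) r, C₂ y x ≤ 2 * r ^ 2 :=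
    fun y hy x hx => hball x hx y hy
  have hC₁m : ∀ x : EuclideanSpace ℝ (Fin d), Continuous (C₁ x) := by
    intro x; simp only [hC₁def]; continuity
  have hC₂m : ∀ y : EuclideanSpace ℝ (Fin d), Continuous (C₂ y) := by
    intro y; simp only [hC₂def]; continuity
  have hf' : ∀ᵐ x ∂P, f x = -ε * Real.log (∫ y, Real.exp ((g y - C₁ x y) / ε) ∂Q) := hf
  have hg' : ∀ᵐ y ∂Q, g y = -ε * Real.log (∫ x, Real.exp ((f x - C₂ y x) / ε) ∂P) := hg
  by_cases hv : Integrable (fun y => Real.exp (g y / ε)) Q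
  · by_cases hu : Integrable (fun x => Real.exp (f x / ε)) P
    · -- main case: both integrable
      set a : ℝ := ∫ y, Real.exp (g y / ε) ∂Q with ha_def
      set b : ℝ := ∫ x, Real.exp (f x / ε) ∂P with hb_def
      have ha : 0 < a := integral_exp_pos hv
      have hfb := auxInt r ε hε P Q C₁ hC₁0 hC₁2 hC₁m f g hPsupp hQsupp hf' hv
      have hgb := auxInt r ε hε Q P C₂ hC₂0 hC₂2 hC₂m g f hQsupp hPsupp hg' hu
      set lam : ℝ := ε * Real.log a with hlam_def
      set mu : ℝ := ε * Real.log b with hmu_def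
      -- g is integrable
      have hgm : AEStronglyMeasurable g Q := by
        have heq : g = fun y => ε * Real.log (Real.exp (g y / ε)) := by
          funext y; rw [Real.log_exp]; field_simp
        rw [heq]
        exact ((Real.measurable_log.comp_aemeasurable
          hv.aemeasurable).const_mul ε).aestronglyMeasurable
      have hgint : Integrable g Q := by
        refine (integrable_const (|mu| + 2 * r ^ 2)).mono' hgm ?_
        filter_upwards [hgb] with y hy
        rw [Real.norm_eq_abs]
        have h1 := neg_abs_le mu
        have h2 := le_abs_self mu
        exact abs_le.mpr ⟨by linarith [hy.1], by linarith [hy.2]⟩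
      -- bounds on mu from normalization
      have hmu1 : -mu ≤ 0 := by
        have h := integral_mono_ae (integrable_const (-mu)) hgint
          (by filter_upwards [hgb] with y hy using hy.1)
        rwa [integral_const, probReal_univ, one_smul, hg0] at h
      have hmu2 : mu ≤ 2 * r ^ 2 := by
        have h := integral_mono_ae hgint (integrable_const (2 * r ^ 2 - mu))
          (by filter_upwards [hgb] with y hy using hy.2)
        rw [integral_const, probReal_univ, one_smul, hg0] at h
        linarith
      have hgbound : ∀ᵐ y ∂Q, |g y| ≤ 2 * r ^ 2 := by
        filter_upwards [hgb] with y hy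
        exact abs_le.mpr ⟨by linarith [hy.1], by linarith [hy.2]⟩
      refine ⟨?_, hgbound⟩
      -- bounds on lam
      have hlam1 : 0 ≤ lam := by
        have hpt : ∀ y, 1 + g y / ε ≤ Real.exp (g y / ε) := by
          intro y
          have := Real.add_one_le_exp (g y / ε)
          linarith
        have hint1 : Integrable (fun y => 1 + g y / ε) Q :=
          (integrable_const 1).add (hgint.div_const ε)
        have h := integral_mono hint1 hv hpt
        rw [integral_add (integrable_const 1) (hgint.div_const ε), integral_const,
          probReal_univ, one_smul, integral_div, hg0, zero_div,
          add_zero] at h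
        have : 0 ≤ Real.log a := Real.log_nonneg h
        positivity
      have hlam2 : lam ≤ 2 * r ^ 2 := by
        have hub : ∀ᵐ y ∂Q, Real.exp (g y / ε) ≤ Real.exp (2 * r ^ 2 / ε) := by
          filter_upwards [hgbound] with y hy
          apply Real.exp_le_exp.mpr
          apply div_le_div_of_nonneg_right _ hε.le
          exact (abs_le.mp hy).2
        have h := integral_mono_ae hv (integrable_const _) hub
        rw [integral_const, probReal_univ, one_smul] at h
        have hloga : Real.log a ≤ 2 * r ^ 2 / ε := by
          calc Real.log a ≤ Real.log (Real.exp (2 * r ^ 2 / ε)) := Real.log_le_log ha h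
            _ = 2 * r ^ 2 / ε := Real.log_exp _
        have hkey : ε * (2 * r ^ 2 / ε) = 2 * r ^ 2 := mul_div_cancel₀ _ hε.ne'
        calc lam = ε * Real.log a := hlam_def
          _ ≤ ε * (2 * r ^ 2 / ε) := mul_le_mul_of_nonneg_left hloga hε.le
          _ = 2 * r ^ 2 := hkey
      filter_upwards [hfb] with x hx
      exact abs_le.mpr ⟨by linarith [hx.1], by linarith [hx.2]⟩
    · -- u not integrable: g = 0 a.e., then f ∈ [0, 2r²]
      have hg0' : ∀ᵐ y ∂Q, g y = 0 :=
        auxNotInt r ε hε Q P C₂ hC₂0 hC₂2 hC₂m g f hQsupp hPsupp hg' hu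
      have hv1 : Integrable (fun y => Real.exp (g y / ε)) Q := hv
      have ha1 : (∫ y, Real.exp (g y / ε) ∂Q) = 1 := by
        have : (fun y => Real.exp (g y / ε)) =ᵐ[Q] fun _ => 1 := by
          filter_upwards [hg0'] with y hy; rw [hy, zero_div, Real.exp_zero]
        rw [integral_congr_ae this, integral_const, probReal_univ,
          one_smul]
      have hfb := auxInt r ε hε P Q C₁ hC₁0 hC₁2 hC₁m f g hPsupp hQsupp hf' hv1
      rw [ha1, Real.log_one, mul_zero] at hfb
      constructor
      · filter_upwards [hfb] with x hx
        exact abs_le.mpr ⟨by linarith [hx.1], by linarith [hx.2]⟩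
      · filter_upwards [hg0'] with y hy
        rw [hy, abs_zero]; linarith
  · -- v not integrable: f = 0 a.e., then g ∈ [0, 2r²]
    have hf0' : ∀ᵐ x ∂P, f x = 0 :=
      auxNotInt r ε hε P Q C₁ hC₁0 hC₁2 hC₁m f g hPsupp hQsupp hf' hv
    have hu1 : Integrable (fun x => Real.exp (f x / ε)) P := by
      refine (integrable_const 1).congr ?_
      filter_upwards [hf0'] with x hx
      rw [hx, zero_div, Real.exp_zero]
    have hb1 : (∫ x, Real.exp (f x / ε) ∂P) = 1 := by
      have : (fun x => Real.exp (f x / ε)) =ᵐ[P] fun _ => 1 := by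
        filter_upwards [hf0'] with x hx; rw [hx, zero_div, Real.exp_zero]
      rw [integral_congr_ae this, integral_const, probReal_univ,
        one_smul]
    have hgb := auxInt r ε hε Q P C₂ hC₂0 hC₂2 hC₂m g f hQsupp hPsupp hg' hu1
    rw [hb1, Real.log_one, mul_zero] at hgb
    constructor
    · filter_upwards [hf0'] with x hx
      rw [hx, abs_zero]; linarith
    · filter_upwards [hgb] with y hy
      exact abs_le.mpr ⟨by linarith [hy.1], by linarith [hy.2]⟩
end

section
/- Let h: ℝ^d × ℝ^d → ℝ be bounded with h(x,x) = 0 for all x. Let X, X', X₁,…,X_n ∼ P and Y, Y', Y₁,…,Y_n ∼ Q be jointly independent. Then E| (1/n²)∑_{i,j} [2h(X_i,Y_j) − h(X_i,X_j) − h(Y_i,Y_j)] − E[2h(X,Y) − h(X,X') − h(Y,Y')] | ≤ 8‖h‖_∞ √(π/n). -/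
open MeasureTheory ProbabilityTheory Function



section Aux

variable {Ω : Type*} [MeasurableSpace Ω] {μ : Measure Ω}

lemma integrable_of_bdd [IsFiniteMeasure μ] {f : Ω → ℝ} (hf : AEStronglyMeasurable f μ)
    {M : ℝ} (hb : ∀ ω, |f ω| ≤ M) : Integrable f μ :=
  (integrable_const M).mono' hf (Filter.Eventually.of_forall
    (by simpa [Real.norm_eq_abs] using hb))

lemma integral_abs_le_sqrt [IsProbabilityMeasure μ]
    {g : Ω → ℝ} (hg : Integrable g μ) (hg2 : Integrable (fun ω => g ω * g ω) μ) :
    ∫ ω, |g ω| ∂μ ≤ Real.sqrt (∫ ω, g ω * g ω ∂μ) := by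
  set t := ∫ ω, |g ω| ∂μ with ht
  have ht0 : 0 ≤ t := integral_nonneg fun ω => abs_nonneg _
  have habs : Integrable (fun ω => |g ω|) μ := hg.abs
  have key : 0 ≤ ∫ ω, (|g ω| - t) * (|g ω| - t) ∂μ :=
    integral_nonneg fun ω => mul_self_nonneg _
  have expand : ∫ ω, (|g ω| - t) * (|g ω| - t) ∂μ = ∫ ω, g ω * g ω ∂μ - t * t := by
    have h1 : ∀ ω, (|g ω| - t) * (|g ω| - t) = (g ω * g ω - (2 * t) * |g ω|) + t * t := by
      intro ω
      have := abs_mul_abs_self (g ω)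
      nlinarith [this]
    simp_rw [h1]
    have i2 : Integrable (fun ω => 2 * t * |g ω|) μ := habs.const_mul _
    have i1 : Integrable (fun ω => g ω * g ω - 2 * t * |g ω|) μ := hg2.sub i2
    rw [integral_add i1 (integrable_const _), integral_sub hg2 i2,
        integral_const_mul, integral_const]
    simp only [measure_univ, probReal_univ, ENNReal.toReal_one, smul_eq_mul, one_mul, ← ht]
    ring
  have hle : t * t ≤ ∫ ω, g ω * g ω ∂μ := by
    rw [expand] at key; linarith
  calc t = Real.sqrt (t * t) := (Real.sqrt_mul_self ht0).symm
    _ ≤ _ := Real.sqrt_le_sqrt hle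

lemma integral_abs_sum_le [IsProbabilityMeasure μ]
    {β : Type*} [Fintype β] [DecidableEq β] (F : β → Ω → ℝ)
    (hInt : ∀ p, Integrable (F p) μ)
    (hmul : ∀ p q, Integrable (fun ω => F p ω * F q ω) μ)
    (r : β → β → Prop) [DecidableRel r] (K : ℝ)
    (h0 : ∀ p q, ¬ r p q → ∫ ω, F p ω * F q ω ∂μ = 0)
    (hK : ∀ p q, r p q → |∫ ω, F p ω * F q ω ∂μ| ≤ K) :
    ∫ ω, |∑ p, F p ω| ∂μ ≤
      Real.sqrt (K * (Finset.univ.filter (fun pq : β × β => r pq.1 pq.2)).card) := by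
  have hsq : ∀ ω, (∑ p, F p ω) * (∑ p, F p ω) = ∑ pq : β × β, F pq.1 ω * F pq.2 ω := by
    intro ω
    rw [Finset.sum_mul_sum, Fintype.sum_prod_type]
  have hgInt : Integrable (fun ω => ∑ p, F p ω) μ :=
    integrable_finset_sum _ fun p _ => hInt p
  have hg2Int : Integrable (fun ω => (∑ p, F p ω) * (∑ p, F p ω)) μ := by
    have : (fun ω => (∑ p, F p ω) * (∑ p, F p ω))
        = fun ω => ∑ pq : β × β, F pq.1 ω * F pq.2 ω := funext hsq
    rw [this]
    exact integrable_finset_sum _ fun pq _ => hmul pq.1 pq.2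
  have step1 : ∫ ω, |∑ p, F p ω| ∂μ ≤ Real.sqrt (∫ ω, (∑ p, F p ω) * (∑ p, F p ω) ∂μ) :=
    integral_abs_le_sqrt hgInt hg2Int
  have step2 : ∫ ω, (∑ p, F p ω) * (∑ p, F p ω) ∂μ
      ≤ K * (Finset.univ.filter (fun pq : β × β => r pq.1 pq.2)).card := by
    calc ∫ ω, (∑ p, F p ω) * (∑ p, F p ω) ∂μ
        = ∑ pq : β × β, ∫ ω, F pq.1 ω * F pq.2 ω ∂μ := by
          simp_rw [hsq]
          exact integral_finset_sum _ fun pq _ => hmul pq.1 pq.2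
      _ ≤ ∑ pq : β × β, (if r pq.1 pq.2 then K else 0) := by
          apply Finset.sum_le_sum
          intro pq _
          by_cases hr : r pq.1 pq.2
          · rw [if_pos hr]
            exact (le_abs_self _).trans (hK _ _ hr)
          · rw [if_neg hr, h0 _ _ hr]
      _ = K * (Finset.univ.filter (fun pq : β × β => r pq.1 pq.2)).card := by
          rw [Finset.sum_ite, Finset.sum_const, Finset.sum_const_zero, add_zero,
            nsmul_eq_mul, mul_comm]
  exact step1.trans (Real.sqrt_le_sqrt step2)

lemma var_le {γ : Type*} [MeasurableSpace γ] (ρ : Measure γ) [IsProbabilityMeasure ρ]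
    {f : γ → ℝ} (hf : AEStronglyMeasurable f ρ) {C : ℝ} (hb : ∀ x, |f x| ≤ C)
    {m : ℝ} (hm : ∫ x, f x ∂ρ = m) :
    ∫ x, (f x - m) * (f x - m) ∂ρ ≤ C ^ 2 := by
  have hIf : Integrable f ρ := integrable_of_bdd hf hb
  have hIf2 : Integrable (fun x => f x * f x) ρ :=
    integrable_of_bdd (hf.mul hf) (M := C ^ 2) (fun x => by
      have := hb x; rw [abs_mul]; nlinarith [abs_nonneg (f x)])
  have expand : ∫ x, (f x - m) * (f x - m) ∂ρ = (∫ x, f x * f x ∂ρ) - m ^ 2 := by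
    have h1 : ∀ x, (f x - m) * (f x - m) = (f x * f x - (2 * m) * f x) + m ^ 2 := by
      intro x; ring
    simp_rw [h1]
    have i2 : Integrable (fun x => 2 * m * f x) ρ := hIf.const_mul _
    have i1 : Integrable (fun x => f x * f x - 2 * m * f x) ρ := hIf2.sub i2
    rw [integral_add i1 (integrable_const _), integral_sub hIf2 i2,
        integral_const_mul, integral_const, hm]
    simp only [measure_univ, probReal_univ, ENNReal.toReal_one, smul_eq_mul, one_mul]
    ring
  have hsq : ∫ x, f x * f x ∂ρ ≤ C ^ 2 := by
    calc ∫ x, f x * f x ∂ρ ≤ ∫ _x, C ^ 2 ∂ρ := by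
          apply integral_mono hIf2 (integrable_const _)
          intro x
          simp only
          nlinarith [hb x, abs_nonneg (f x), abs_mul_abs_self (f x)]
      _ = C ^ 2 := by simp
  rw [expand]; nlinarith [sq_nonneg m]

end Aux

section PiAux


variable {ι : Type*} [Fintype ι] {α : Type*} [MeasurableSpace α]
  (ν : ι → Measure α) [∀ i, IsProbabilityMeasure (ν i)]

lemma pi_eval_measure (i : ι) {A : Set α} (hA : MeasurableSet A) :
    Measure.pi ν ((fun x => x i) ⁻¹' A) = ν i A := by
  classical
  have hpre : ((fun x : ι → α => x i) ⁻¹' A)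
      = Set.pi Set.univ (Function.update (fun _ => Set.univ) i A) := by
    ext x
    simp only [Set.mem_preimage, Set.mem_pi, Set.mem_univ, true_implies]
    constructor
    · intro hx j
      rcases eq_or_ne j i with rfl | hj
      · simpa using hx
      · simp [Function.update_of_ne hj]
    · intro hx
      have := hx i
      simpa using this
  rw [hpre, Measure.pi_pi]
  rw [Finset.prod_eq_single i]
  · simp
  · intro j _ hj
    simp [Function.update_of_ne hj]
  · intro hi
    exact absurd (Finset.mem_univ i) hi

lemma iIndepFun_eval :
    iIndepFun (fun i (x : ι → α) => x i) (Measure.pi ν) := by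
  classical
  rw [iIndepFun_iff_measure_inter_preimage_eq_mul]
  intro S sets hsets
  have hLHS : (⋂ i ∈ S, (fun x : ι → α => x i) ⁻¹' sets i)
      = Set.pi Set.univ (fun i => if i ∈ S then sets i else Set.univ) := by
    ext x
    simp only [Set.mem_iInter, Set.mem_preimage, Set.mem_pi, Set.mem_univ, true_implies]
    constructor
    · intro hx i
      by_cases hi : i ∈ S
      · rw [if_pos hi]; exact hx i hi
      · rw [if_neg hi]; exact Set.mem_univ _
    · intro hx i hi
      have := hx i
      rwa [if_pos hi] at this
  rw [hLHS, Measure.pi_pi]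
  have hRHS : ∀ i ∈ S, Measure.pi ν ((fun x : ι → α => x i) ⁻¹' sets i) = ν i (sets i) :=
    fun i hi => pi_eval_measure ν i (hsets i hi)
  rw [Finset.prod_congr rfl hRHS]
  calc ∏ i : ι, ν i (if i ∈ S then sets i else Set.univ)
      = ∏ i : ι, (if i ∈ S then ν i (sets i) else 1) := by
        apply Finset.prod_congr rfl
        intro i _
        by_cases hi : i ∈ S
        · simp [hi]
        · simp [hi]
    _ = ∏ i ∈ S, ν i (sets i) := by
        rw [Finset.prod_ite_mem Finset.univ S, Finset.univ_inter]

lemma pi_map_eval (i : ι) :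
    Measure.map (fun x : ι → α => x i) (Measure.pi ν) = ν i := by
  apply Measure.ext
  intro s hs
  rw [Measure.map_apply (measurable_pi_apply i) hs, pi_eval_measure ν i hs]

lemma pi_map_pair {i j : ι} (hij : i ≠ j) :
    Measure.map (fun x : ι → α => (x i, x j)) (Measure.pi ν) = (ν i).prod (ν j) := by
  have hind : IndepFun (fun x : ι → α => x i) (fun x : ι → α => x j) (Measure.pi ν) :=
    (iIndepFun_eval ν).indepFun hij
  rw [indepFun_iff_map_prod_eq_prod_map_map (measurable_pi_apply i).aemeasurable
    (measurable_pi_apply j).aemeasurable] at hind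
  rw [hind, pi_map_eval, pi_map_eval]

lemma pi_integral_pair {i j : ι} (hij : i ≠ j) (f : α × α → ℝ)
    (hf : AEStronglyMeasurable f ((ν i).prod (ν j))) :
    ∫ x, f (x i, x j) ∂Measure.pi ν = ∫ p, f p ∂((ν i).prod (ν j)) := by
  rw [← pi_map_pair ν hij, integral_map
    ((measurable_pi_apply i).prodMk (measurable_pi_apply j)).aemeasurable
    (by rwa [pi_map_pair ν hij])]

lemma pi_integral_split {i j k l : ι} (hij : i ≠ j) (hkl : k ≠ l)
    (hik : i ≠ k) (hil : i ≠ l) (hjk : j ≠ k) (hjl : j ≠ l)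
    {f g : α × α → ℝ} (hf : Measurable f) (hg : Measurable g)
    {Mf Mg : ℝ} (hMf : ∀ p, |f p| ≤ Mf) (hMg : ∀ p, |g p| ≤ Mg) :
    ∫ x, f (x i, x j) * g (x k, x l) ∂Measure.pi ν
      = (∫ p, f p ∂((ν i).prod (ν j))) * ∫ p, g p ∂((ν k).prod (ν l)) := by
  have hpair : IndepFun (fun x : ι → α => (x i, x j)) (fun x : ι → α => (x k, x l))
      (Measure.pi ν) :=
    (iIndepFun_eval ν).indepFun_prodMk_prodMk (fun s => measurable_pi_apply s)
      i j k l hik hil hjk hjl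
  have hind : IndepFun (fun x : ι → α => f (x i, x j)) (fun x : ι → α => g (x k, x l))
      (Measure.pi ν) := hpair.comp hf hg
  have hmi : Measurable (fun x : ι → α => f (x i, x j)) :=
    hf.comp ((measurable_pi_apply i).prodMk (measurable_pi_apply j))
  have hmg : Measurable (fun x : ι → α => g (x k, x l)) :=
    hg.comp ((measurable_pi_apply k).prodMk (measurable_pi_apply l))
  have hIf : Integrable (fun x : ι → α => f (x i, x j)) (Measure.pi ν) :=
    integrable_of_bdd hmi.aestronglyMeasurable (fun x => hMf _)
  have hIg : Integrable (fun x : ι → α => g (x k, x l)) (Measure.pi ν) :=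
    integrable_of_bdd hmg.aestronglyMeasurable (fun x => hMg _)
  have := hind.integral_mul_eq_mul_integral hIf.aestronglyMeasurable hIg.aestronglyMeasurable
  calc ∫ x, f (x i, x j) * g (x k, x l) ∂Measure.pi ν
      = ∫ x, ((fun x : ι → α => f (x i, x j)) * fun x : ι → α => g (x k, x l)) x
          ∂Measure.pi ν := rfl
    _ = (∫ x, f (x i, x j) ∂Measure.pi ν) * ∫ x, g (x k, x l) ∂Measure.pi ν := this
    _ = _ := by
        rw [pi_integral_pair ν hij f hf.aestronglyMeasurable,
          pi_integral_pair ν hkl g hg.aestronglyMeasurable]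

end PiAux

section Counting

lemma card_filter_le_of_injOn {β γ : Type*} [Fintype β] [Fintype γ]
    (p : β → Prop) [DecidablePred p] (f : β → γ)
    (hf : Set.InjOn f (Finset.univ.filter p)) :
    (Finset.univ.filter p).card ≤ Fintype.card γ := by
  calc (Finset.univ.filter p).card ≤ (Finset.univ : Finset γ).card :=
        Finset.card_le_card_of_injOn f (fun _ _ => Finset.mem_univ _) hf
    _ = Fintype.card γ := Finset.card_univ

lemma card_eq_fst_le {n : ℕ} (g : Fin n × Fin n → Fin n) :
    (Finset.univ.filter
      (fun pq : (Fin n × Fin n) × (Fin n × Fin n) => g pq.1 = pq.2.1)).card ≤ n ^ 3 := by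
  have := card_filter_le_of_injOn
    (fun pq : (Fin n × Fin n) × (Fin n × Fin n) => g pq.1 = pq.2.1)
    (fun pq => (pq.1, pq.2.2)) ?_
  · simpa [pow_succ, mul_assoc, mul_comm] using this
  · intro a ha b hb hab
    simp only [Finset.coe_filter, Set.mem_setOf_eq, Finset.mem_univ, true_and] at ha hb
    obtain ⟨h1, h2⟩ := Prod.mk.injEq .. ▸ hab
    simp only [Prod.mk.injEq] at hab
    obtain ⟨e1, e2⟩ := hab
    have e3 : a.2.1 = b.2.1 := by rw [← ha, ← hb, e1]
    exact Prod.ext e1 (Prod.ext e3 e2)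

lemma card_eq_snd_le {n : ℕ} (g : Fin n × Fin n → Fin n) :
    (Finset.univ.filter
      (fun pq : (Fin n × Fin n) × (Fin n × Fin n) => g pq.1 = pq.2.2)).card ≤ n ^ 3 := by
  have := card_filter_le_of_injOn
    (fun pq : (Fin n × Fin n) × (Fin n × Fin n) => g pq.1 = pq.2.2)
    (fun pq => (pq.1, pq.2.1)) ?_
  · simpa [pow_succ, mul_assoc, mul_comm] using this
  · intro a ha b hb hab
    simp only [Finset.coe_filter, Set.mem_setOf_eq, Finset.mem_univ, true_and] at ha hb
    simp only [Prod.mk.injEq] at hab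
    obtain ⟨e1, e2⟩ := hab
    have e3 : a.2.2 = b.2.2 := by rw [← ha, ← hb, e1]
    exact Prod.ext e1 (Prod.ext e2 e3)

lemma card_rA_le (n : ℕ) :
    ((Finset.univ.filter (fun pq : (Fin n × Fin n) × (Fin n × Fin n) =>
      pq.1.1 = pq.2.1 ∨ pq.1.2 = pq.2.2)).card : ℝ) ≤ 2 * n ^ 3 := by
  have h1 := card_eq_fst_le (n := n) (fun x => x.1)
  have h2 := card_eq_snd_le (n := n) (fun x => x.2)
  have := Finset.card_union_le
    (Finset.univ.filter (fun pq : (Fin n × Fin n) × (Fin n × Fin n) => pq.1.1 = pq.2.1))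
    (Finset.univ.filter (fun pq : (Fin n × Fin n) × (Fin n × Fin n) => pq.1.2 = pq.2.2))
  rw [← Finset.filter_or] at this
  have hcard : (Finset.univ.filter (fun pq : (Fin n × Fin n) × (Fin n × Fin n) =>
      pq.1.1 = pq.2.1 ∨ pq.1.2 = pq.2.2)).card ≤ 2 * n ^ 3 := by omega
  exact_mod_cast hcard

lemma card_rB_le (n : ℕ) :
    ((Finset.univ.filter (fun pq : (Fin n × Fin n) × (Fin n × Fin n) =>
      pq.1.1 = pq.2.1 ∨ pq.1.1 = pq.2.2 ∨ pq.1.2 = pq.2.1 ∨ pq.1.2 = pq.2.2)).card : ℝ)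
      ≤ 4 * n ^ 3 := by
  have h1 := card_eq_fst_le (n := n) (fun x => x.1)
  have h2 := card_eq_snd_le (n := n) (fun x => x.1)
  have h3 := card_eq_fst_le (n := n) (fun x => x.2)
  have h4 := card_eq_snd_le (n := n) (fun x => x.2)
  have u1 := Finset.card_union_le
    (Finset.univ.filter (fun pq : (Fin n × Fin n) × (Fin n × Fin n) => pq.1.2 = pq.2.1))
    (Finset.univ.filter (fun pq : (Fin n × Fin n) × (Fin n × Fin n) => pq.1.2 = pq.2.2))
  rw [← Finset.filter_or] at u1
  have u2 := Finset.card_union_le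
    (Finset.univ.filter (fun pq : (Fin n × Fin n) × (Fin n × Fin n) => pq.1.1 = pq.2.2))
    (Finset.univ.filter (fun pq : (Fin n × Fin n) × (Fin n × Fin n) =>
      pq.1.2 = pq.2.1 ∨ pq.1.2 = pq.2.2))
  rw [← Finset.filter_or] at u2
  have u3 := Finset.card_union_le
    (Finset.univ.filter (fun pq : (Fin n × Fin n) × (Fin n × Fin n) => pq.1.1 = pq.2.1))
    (Finset.univ.filter (fun pq : (Fin n × Fin n) × (Fin n × Fin n) =>
      pq.1.1 = pq.2.2 ∨ pq.1.2 = pq.2.1 ∨ pq.1.2 = pq.2.2))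
  rw [← Finset.filter_or] at u3
  have hcard : (Finset.univ.filter (fun pq : (Fin n × Fin n) × (Fin n × Fin n) =>
      pq.1.1 = pq.2.1 ∨ pq.1.1 = pq.2.2 ∨ pq.1.2 = pq.2.1 ∨ pq.1.2 = pq.2.2)).card
      ≤ 4 * n ^ 3 := by omega
  exact_mod_cast hcard

end Counting

section SampleBounds

variable {α : Type*} [MeasurableSpace α] {ι : Type*} [Fintype ι]
  (ν : ι → Measure α) [∀ i, IsProbabilityMeasure (ν i)]

lemma abs_int_le {Ω : Type*} [MeasurableSpace Ω] {μ : Measure Ω} (f : Ω → ℝ) :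
    |∫ ω, f ω ∂μ| ≤ ∫ ω, |f ω| ∂μ := by
  simpa [Real.norm_eq_abs] using norm_integral_le_integral_norm (μ := μ) f

lemma two_sample_bound {n : ℕ} (eX eY : Fin n → ι)
    (hX : Function.Injective eX) (hY : Function.Injective eY)
    (hXY : ∀ i j, eX i ≠ eY j)
    (R S : Measure α) [IsProbabilityMeasure R] [IsProbabilityMeasure S]
    (hRX : ∀ i, ν (eX i) = R) (hSY : ∀ j, ν (eY j) = S)
    (h : α → α → ℝ) (hmeas : Measurable (Function.uncurry h))
    {C : ℝ} (hC0 : 0 ≤ C) (hbd : ∀ x y, |h x y| ≤ C)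
    {m : ℝ} (hm : (∫ p, h p.1 p.2 ∂(R.prod S)) = m) :
    ∫ z, |∑ p : Fin n × Fin n, (h (z (eX p.1)) (z (eY p.2)) - m)| ∂Measure.pi ν
      ≤ 2 * C * n * Real.sqrt n := by
  have hmC : |m| ≤ C := by
    rw [← hm]
    calc |∫ p, h p.1 p.2 ∂(R.prod S)| ≤ ∫ p, |h p.1 p.2| ∂(R.prod S) :=
          abs_int_le _
      _ ≤ ∫ _p, C ∂(R.prod S) := by
          apply integral_mono _ (integrable_const _) (fun p => hbd _ _)
          exact (integrable_of_bdd hmeas.aestronglyMeasurable (fun p => hbd p.1 p.2)).abs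
      _ = C := by simp
  set f : α × α → ℝ := fun p => h p.1 p.2 - m with hf
  have hfm : Measurable f := hmeas.sub measurable_const
  have hfb : ∀ p, |f p| ≤ 2 * C := by
    intro p
    calc |h p.1 p.2 - m| ≤ |h p.1 p.2| + |m| := abs_sub _ _
      _ ≤ C + C := add_le_add (hbd _ _) hmC
      _ = 2 * C := by ring
  have hIf : Integrable (Function.uncurry h) (R.prod S) :=
    integrable_of_bdd hmeas.aestronglyMeasurable (fun p => hbd p.1 p.2)
  have hIf' : Integrable (fun p : α × α => h p.1 p.2) (R.prod S) := hIf
  have hzero : ∫ p, f p ∂(R.prod S) = 0 := by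
    rw [hf]
    rw [integral_sub hIf' (integrable_const _), integral_const, hm]
    simp
  have hvar : ∫ p, f p * f p ∂(R.prod S) ≤ C ^ 2 :=
    var_le (R.prod S) hmeas.aestronglyMeasurable (fun p => hbd p.1 p.2) hm
  -- the summands
  set F : Fin n × Fin n → (ι → α) → ℝ := fun p z => f (z (eX p.1), z (eY p.2)) with hF
  have hFm : ∀ p, Measurable (F p) := fun p =>
    hfm.comp ((measurable_pi_apply _).prodMk (measurable_pi_apply _))
  have hFb : ∀ p z, |F p z| ≤ 2 * C := fun p z => hfb _
  have hInt : ∀ p, Integrable (F p) (Measure.pi ν) := fun p =>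
    integrable_of_bdd (hFm p).aestronglyMeasurable (hFb p)
  have hmul : ∀ p q, Integrable (fun z => F p z * F q z) (Measure.pi ν) := by
    intro p q
    refine integrable_of_bdd ((hFm p).mul (hFm q)).aestronglyMeasurable
      (M := (2 * C) * (2 * C)) (fun z => ?_)
    rw [abs_mul]
    exact mul_le_mul (hFb p z) (hFb q z) (abs_nonneg _) (by linarith)
  have hsec : ∀ q : Fin n × Fin n, ∫ z, F q z * F q z ∂Measure.pi ν ≤ C ^ 2 := by
    intro q
    have := pi_integral_pair ν (i := eX q.1) (j := eY q.2) (hXY _ _)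
      (fun p => f p * f p) (by rw [hRX, hSY]; exact (hfm.mul hfm).aestronglyMeasurable)
    rw [show (fun z : ι → α => F q z * F q z)
        = (fun z : ι → α => (fun p => f p * f p) (z (eX q.1), z (eY q.2))) from rfl]
    rw [this, hRX, hSY]
    exact hvar
  have key := integral_abs_sum_le F hInt hmul
    (fun p q => p.1 = q.1 ∨ p.2 = q.2) (2 * C ^ 2) ?_ ?_
  · refine key.trans ?_
    have hcard := card_rA_le n
    have hKle : (2 * C ^ 2) * ((Finset.univ.filter
        (fun pq : (Fin n × Fin n) × (Fin n × Fin n) =>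
          pq.1.1 = pq.2.1 ∨ pq.1.2 = pq.2.2)).card : ℝ) ≤ (2 * C * n) ^ 2 * n := by
      have h2 : (0:ℝ) ≤ 2 * C ^ 2 := by positivity
      calc (2 * C ^ 2) * _ ≤ (2 * C ^ 2) * (2 * (n:ℝ) ^ 3) := by
            exact mul_le_mul_of_nonneg_left hcard h2
        _ = (2 * C * n) ^ 2 * n := by ring
    calc Real.sqrt _ ≤ Real.sqrt ((2 * C * n) ^ 2 * n) := Real.sqrt_le_sqrt hKle
      _ = 2 * C * n * Real.sqrt n := by
          rw [Real.sqrt_mul (sq_nonneg _), Real.sqrt_sq (by positivity)]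
  · -- vanishing for disjoint index pairs
    intro p q hnr
    rw [not_or] at hnr
    obtain ⟨h1, h2⟩ := hnr
    have hsplit := pi_integral_split ν (i := eX p.1) (j := eY p.2) (k := eX q.1) (l := eY q.2)
      (hXY _ _) (hXY _ _) (fun e => h1 (hX e)) (hXY _ _) (Ne.symm (hXY _ _))
      (fun e => h2 (hY e)) hfm hfm hfb hfb
    rw [show (fun z : ι → α => F p z * F q z)
        = (fun z : ι → α => f (z (eX p.1), z (eY p.2)) * f (z (eX q.1), z (eY q.2))) from rfl]
    rw [hsplit, hRX, hSY, hRX, hSY, hzero, mul_zero]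
  · -- bound on overlapping pairs
    intro p q _
    calc |∫ z, F p z * F q z ∂Measure.pi ν| ≤ ∫ z, |F p z * F q z| ∂Measure.pi ν :=
          abs_int_le _
      _ ≤ ∫ z, (2 * C) * |F q z| ∂Measure.pi ν := by
          apply integral_mono (hmul p q).abs ((hInt q).abs.const_mul _)
          intro z
          simp only
          rw [abs_mul]
          exact mul_le_mul_of_nonneg_right (hFb p z) (abs_nonneg _)
      _ = (2 * C) * ∫ z, |F q z| ∂Measure.pi ν := integral_const_mul _ _
      _ ≤ (2 * C) * Real.sqrt (∫ z, F q z * F q z ∂Measure.pi ν) := by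
          apply mul_le_mul_of_nonneg_left (integral_abs_le_sqrt (hInt q) (hmul q q))
          linarith
      _ ≤ (2 * C) * Real.sqrt (C ^ 2) := by
          apply mul_le_mul_of_nonneg_left (Real.sqrt_le_sqrt (hsec q)) (by linarith)
      _ = 2 * C ^ 2 := by rw [Real.sqrt_sq hC0]; ring

end SampleBounds

section OneSample

variable {α : Type*} [MeasurableSpace α] {ι : Type*} [Fintype ι]
  (ν : ι → Measure α) [∀ i, IsProbabilityMeasure (ν i)]

lemma one_sample_bound {n : ℕ} (e : Fin n → ι) (he : Function.Injective e)
    (R : Measure α) [IsProbabilityMeasure R] (hR : ∀ i, ν (e i) = R)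
    (h : α → α → ℝ) (hmeas : Measurable (Function.uncurry h))
    {C : ℝ} (hC0 : 0 ≤ C) (hbd : ∀ x y, |h x y| ≤ C)
    {m : ℝ} (hm : (∫ p, h p.1 p.2 ∂(R.prod R)) = m) :
    ∫ z, |∑ p : Fin n × Fin n,
        (if p.1 = p.2 then 0 else h (z (e p.1)) (z (e p.2)) - m)| ∂Measure.pi ν
      ≤ 3 * C * n * Real.sqrt n := by
  have hmC : |m| ≤ C := by
    rw [← hm]
    calc |∫ p, h p.1 p.2 ∂(R.prod R)| ≤ ∫ p, |h p.1 p.2| ∂(R.prod R) := abs_int_le _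
      _ ≤ ∫ _p, C ∂(R.prod R) := by
          apply integral_mono _ (integrable_const _) (fun p => hbd _ _)
          exact (integrable_of_bdd hmeas.aestronglyMeasurable (fun p => hbd p.1 p.2)).abs
      _ = C := by simp
  set f : α × α → ℝ := fun p => h p.1 p.2 - m with hf
  have hfm : Measurable f := hmeas.sub measurable_const
  have hfb : ∀ p, |f p| ≤ 2 * C := by
    intro p
    calc |h p.1 p.2 - m| ≤ |h p.1 p.2| + |m| := abs_sub _ _
      _ ≤ C + C := add_le_add (hbd _ _) hmC
      _ = 2 * C := by ring
  have hIf' : Integrable (fun p : α × α => h p.1 p.2) (R.prod R) :=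
    integrable_of_bdd hmeas.aestronglyMeasurable (fun p => hbd p.1 p.2)
  have hzero : ∫ p, f p ∂(R.prod R) = 0 := by
    rw [hf, integral_sub hIf' (integrable_const _), integral_const, hm]
    simp
  have hvar : ∫ p, f p * f p ∂(R.prod R) ≤ C ^ 2 :=
    var_le (R.prod R) hmeas.aestronglyMeasurable (fun p => hbd p.1 p.2) hm
  set F : Fin n × Fin n → (ι → α) → ℝ :=
    fun p z => if p.1 = p.2 then 0 else f (z (e p.1), z (e p.2)) with hF
  have hFm : ∀ p, Measurable (F p) := by
    intro p
    by_cases hp : p.1 = p.2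
    · simp only [hF, if_pos hp]; exact measurable_const
    · simp only [hF, if_neg hp]
      exact hfm.comp ((measurable_pi_apply _).prodMk (measurable_pi_apply _))
  have hFb : ∀ p z, |F p z| ≤ 2 * C := by
    intro p z
    by_cases hp : p.1 = p.2
    · simp only [hF, if_pos hp, abs_zero]; linarith
    · simp only [hF, if_neg hp]; exact hfb _
  have hInt : ∀ p, Integrable (F p) (Measure.pi ν) := fun p =>
    integrable_of_bdd (hFm p).aestronglyMeasurable (hFb p)
  have hmul : ∀ p q, Integrable (fun z => F p z * F q z) (Measure.pi ν) := by
    intro p q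
    refine integrable_of_bdd ((hFm p).mul (hFm q)).aestronglyMeasurable
      (M := (2 * C) * (2 * C)) (fun z => ?_)
    rw [abs_mul]
    exact mul_le_mul (hFb p z) (hFb q z) (abs_nonneg _) (by linarith)
  have hsec : ∀ q : Fin n × Fin n, ∫ z, F q z * F q z ∂Measure.pi ν ≤ C ^ 2 := by
    intro q
    by_cases hq : q.1 = q.2
    · simp only [hF, if_pos hq, mul_zero, integral_zero]
      positivity
    · have hpair := pi_integral_pair ν (i := e q.1) (j := e q.2) (fun ee => hq (he ee))
        (fun p => f p * f p) (by rw [hR, hR]; exact (hfm.mul hfm).aestronglyMeasurable)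
      have : (fun z : ι → α => F q z * F q z)
          = (fun z : ι → α => (fun p => f p * f p) (z (e q.1), z (e q.2))) := by
        funext z; simp only [hF, if_neg hq]
      rw [this, hpair, hR, hR]
      exact hvar
  have key := integral_abs_sum_le F hInt hmul
    (fun p q => p.1 = q.1 ∨ p.1 = q.2 ∨ p.2 = q.1 ∨ p.2 = q.2) (2 * C ^ 2) ?_ ?_
  · refine key.trans ?_
    have hcard := card_rB_le n
    have hKle : (2 * C ^ 2) * ((Finset.univ.filter
        (fun pq : (Fin n × Fin n) × (Fin n × Fin n) =>
          pq.1.1 = pq.2.1 ∨ pq.1.1 = pq.2.2 ∨ pq.1.2 = pq.2.1 ∨ pq.1.2 = pq.2.2)).card : ℝ)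
          ≤ (3 * C * n) ^ 2 * n := by
      have h2 : (0:ℝ) ≤ 2 * C ^ 2 := by positivity
      calc (2 * C ^ 2) * _ ≤ (2 * C ^ 2) * (4 * (n:ℝ) ^ 3) :=
            mul_le_mul_of_nonneg_left hcard h2
        _ ≤ (3 * C * n) ^ 2 * n := by
            have hnn : (0:ℝ) ≤ (n:ℝ) ^ 3 := by positivity
            nlinarith [mul_nonneg (sq_nonneg C) hnn]
    calc Real.sqrt _ ≤ Real.sqrt ((3 * C * n) ^ 2 * n) := Real.sqrt_le_sqrt hKle
      _ = 3 * C * n * Real.sqrt n := by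
          rw [Real.sqrt_mul (sq_nonneg _), Real.sqrt_sq (by positivity)]
  · intro p q hnr
    rw [not_or, not_or, not_or] at hnr
    obtain ⟨h1, h2, h3, h4⟩ := hnr
    by_cases hp : p.1 = p.2
    · simp only [hF, if_pos hp, zero_mul]
      exact integral_zero _ _
    by_cases hq : q.1 = q.2
    · simp only [hF, if_pos hq, mul_zero]
      exact integral_zero _ _
    have hsplit := pi_integral_split ν (i := e p.1) (j := e p.2) (k := e q.1) (l := e q.2)
      (fun ee => hp (he ee)) (fun ee => hq (he ee)) (fun ee => h1 (he ee))
      (fun ee => h2 (he ee)) (fun ee => h3 (he ee)) (fun ee => h4 (he ee))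
      hfm hfm hfb hfb
    have : (fun z : ι → α => F p z * F q z)
        = (fun z : ι → α => f (z (e p.1), z (e p.2)) * f (z (e q.1), z (e q.2))) := by
      funext z; simp only [hF, if_neg hp, if_neg hq]
    rw [this, hsplit]
    simp only [hR]
    rw [hzero, mul_zero]
  · intro p q _
    calc |∫ z, F p z * F q z ∂Measure.pi ν| ≤ ∫ z, |F p z * F q z| ∂Measure.pi ν :=
          abs_int_le _
      _ ≤ ∫ z, (2 * C) * |F q z| ∂Measure.pi ν := by
          apply integral_mono (hmul p q).abs ((hInt q).abs.const_mul _)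
          intro z
          simp only
          rw [abs_mul]
          exact mul_le_mul_of_nonneg_right (hFb p z) (abs_nonneg _)
      _ = (2 * C) * ∫ z, |F q z| ∂Measure.pi ν := integral_const_mul _ _
      _ ≤ (2 * C) * Real.sqrt (∫ z, F q z * F q z ∂Measure.pi ν) := by
          apply mul_le_mul_of_nonneg_left (integral_abs_le_sqrt (hInt q) (hmul q q))
          linarith
      _ ≤ (2 * C) * Real.sqrt (C ^ 2) := by
          apply mul_le_mul_of_nonneg_left (Real.sqrt_le_sqrt (hsec q)) (by linarith)
      _ = 2 * C ^ 2 := by rw [Real.sqrt_sq hC0]; ring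

end OneSample


set_option maxHeartbeats 2000000 in
/-- For a bounded kernel `h` with `h(x,x) = 0` and i.i.d. samples
`X₁,…,X_n ∼ P`, `Y₁,…,Y_n ∼ Q` (jointly independent), the V-statistic
`(1/n²)∑_{i,j}[2h(Xᵢ,Yⱼ) − h(Xᵢ,Xⱼ) − h(Yᵢ,Yⱼ)]` deviates from its population counterpart
`E[2h(X,Y) − h(X,X') − h(Y,Y')]` by at most `8‖h‖_∞ √(π/n)` in expectation. -/
theorem vstat_expected_deviation_bound {d : ℕ} (n : ℕ) (hn : 0 < n) (C : ℝ)
    (h : EuclideanSpace ℝ (Fin d) → EuclideanSpace ℝ (Fin d) → ℝ)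
    (hmeas : Measurable (Function.uncurry h))
    (hbd : ∀ x y, |h x y| ≤ C) (hdiag : ∀ x, h x x = 0)
    (P Q : Measure (EuclideanSpace ℝ (Fin d)))
    [IsProbabilityMeasure P] [IsProbabilityMeasure Q] :
    ∫ xy : (Fin n → EuclideanSpace ℝ (Fin d)) × (Fin n → EuclideanSpace ℝ (Fin d)),
        |(1 / (n : ℝ) ^ 2) * ∑ i : Fin n, ∑ j : Fin n,
            (2 * h (xy.1 i) (xy.2 j) - h (xy.1 i) (xy.1 j) - h (xy.2 i) (xy.2 j))
          - (2 * (∫ x, ∫ y, h x y ∂Q ∂P) - (∫ x, ∫ x', h x x' ∂P ∂P)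
              - (∫ y, ∫ y', h y y' ∂Q ∂Q))|
        ∂((Measure.pi fun _ : Fin n => P).prod (Measure.pi fun _ : Fin n => Q))
      ≤ 8 * C * Real.sqrt (Real.pi / n) := by
  classical
  let E := EuclideanSpace ℝ (Fin d)
  set m1 := ∫ x, ∫ y, h x y ∂Q ∂P with hm1
  set m2 := ∫ x, ∫ x', h x x' ∂P ∂P with hm2
  set m3 := ∫ y, ∫ y', h y y' ∂Q ∂Q with hm3
  have hC0 : 0 ≤ C := by
    have := hbd 0 0
    rw [hdiag 0] at this
    simpa using this
  have hn' : (0:ℝ) < (n:ℝ) := by exact_mod_cast hn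
  -- the sum-index space
  let ι := (Fin n ⊕ Fin n)
  let ν : ι → Measure E := Sum.elim (fun _ => P) (fun _ => Q)
  haveI hνprob : ∀ s : ι, IsProbabilityMeasure (ν s) := by
    rintro (i | j)
    · exact ‹IsProbabilityMeasure P›
    · exact ‹IsProbabilityMeasure Q›
  set e := MeasurableEquiv.sumPiEquivProdPi (fun _ : ι => E) with he
  have hmp : MeasurePreserving e (Measure.pi ν)
      ((Measure.pi fun _ : Fin n => P).prod (Measure.pi fun _ : Fin n => Q)) :=
    MeasureTheory.measurePreserving_sumPiEquivProdPi ν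
  -- integrability facts about h on product measures
  have hIU : ∀ (R S : Measure E), IsProbabilityMeasure R → IsProbabilityMeasure S →
      Integrable (fun p : E × E => h p.1 p.2) (R.prod S) := by
    intro R S hR hS
    have : Integrable (Function.uncurry h) (R.prod S) :=
      integrable_of_bdd hmeas.aestronglyMeasurable (fun p => hbd p.1 p.2)
    exact this
  have hIPQ : Integrable (fun p : E × E => h p.1 p.2) (P.prod Q) :=
    hIU P Q inferInstance inferInstance
  have hIPP : Integrable (fun p : E × E => h p.1 p.2) (P.prod P) :=
    hIU P P inferInstance inferInstance
  have hIQQ : Integrable (fun p : E × E => h p.1 p.2) (Q.prod Q) :=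
    hIU Q Q inferInstance inferInstance
  have hm1' : (∫ p, h p.1 p.2 ∂(P.prod Q)) = m1 := by
    rw [hm1]; simpa using MeasureTheory.integral_prod _ hIPQ
  have hm2' : (∫ p, h p.1 p.2 ∂(P.prod P)) = m2 := by
    rw [hm2]; simpa using MeasureTheory.integral_prod _ hIPP
  have hm3' : (∫ p, h p.1 p.2 ∂(Q.prod Q)) = m3 := by
    rw [hm3]; simpa using MeasureTheory.integral_prod _ hIQQ
  have habs_m : ∀ (R S : Measure E) (mm : ℝ), IsProbabilityMeasure R → IsProbabilityMeasure S →
      (∫ p, h p.1 p.2 ∂(R.prod S)) = mm → |mm| ≤ C := by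
    intro R S mm hR hS hmm
    rw [← hmm]
    calc |∫ p, h p.1 p.2 ∂(R.prod S)| ≤ ∫ p, |h p.1 p.2| ∂(R.prod S) := abs_int_le _
      _ ≤ ∫ _p, C ∂(R.prod S) := by
          exact integral_mono (hIU R S hR hS).abs (integrable_const _) (fun p => hbd _ _)
      _ = C := by simp
  have hm2C : |m2| ≤ C := habs_m P P m2 inferInstance inferInstance hm2'
  have hm3C : |m3| ≤ C := habs_m Q Q m3 inferInstance inferInstance hm3'
  have hm1C : |m1| ≤ C := habs_m P Q m1 inferInstance inferInstance hm1'
  -- the three centered sums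
  set SA : (ι → E) → ℝ :=
    fun z => ∑ p : Fin n × Fin n, (h (z (Sum.inl p.1)) (z (Sum.inr p.2)) - m1) with hSA
  set SB : (ι → E) → ℝ :=
    fun z => ∑ p : Fin n × Fin n,
      (if p.1 = p.2 then 0 else h (z (Sum.inl p.1)) (z (Sum.inl p.2)) - m2) with hSB
  set SC : (ι → E) → ℝ :=
    fun z => ∑ p : Fin n × Fin n,
      (if p.1 = p.2 then 0 else h (z (Sum.inr p.1)) (z (Sum.inr p.2)) - m3) with hSC
  -- pointwise algebraic identity
  have hpt : ∀ z : ι → E,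
      (1 / (n : ℝ) ^ 2) * ∑ i : Fin n, ∑ j : Fin n,
          (2 * h (z (Sum.inl i)) (z (Sum.inr j)) - h (z (Sum.inl i)) (z (Sum.inl j))
            - h (z (Sum.inr i)) (z (Sum.inr j)))
        - (2 * m1 - m2 - m3)
      = (1 / (n : ℝ) ^ 2) * (2 * SA z - SB z - SC z) + (m2 + m3) / n := by
    intro z
    have hcardP : ((Finset.univ : Finset (Fin n × Fin n)).card : ℝ) = (n:ℝ)^2 := by
      simp [Finset.card_univ]
      push_cast
      ring
    have hs1 : SA z = (∑ i : Fin n, ∑ j : Fin n, h (z (Sum.inl i)) (z (Sum.inr j)))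
        - (n:ℝ)^2 * m1 := by
      show (∑ p : Fin n × Fin n, (h (z (Sum.inl p.1)) (z (Sum.inr p.2)) - m1)) = _
      rw [Finset.sum_sub_distrib, Finset.sum_const, nsmul_eq_mul, hcardP,
        Fintype.sum_prod_type]
    have haux : ∀ (w : Fin n → E) (mm : ℝ),
        (∑ p : Fin n × Fin n, (if p.1 = p.2 then 0 else h (w p.1) (w p.2) - mm))
        = (∑ i : Fin n, ∑ j : Fin n, h (w i) (w j)) - ((n:ℝ)^2 - n) * mm := by
      intro w mm
      have hterm : ∀ p : Fin n × Fin n,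
          (if p.1 = p.2 then 0 else h (w p.1) (w p.2) - mm)
          = h (w p.1) (w p.2) - (if p.1 = p.2 then 0 else mm) := by
        intro p
        by_cases hp : p.1 = p.2
        · rw [if_pos hp, if_pos hp, hp, hdiag]
          ring
        · rw [if_neg hp, if_neg hp]
      have hinner : ∀ i : Fin n, (∑ j : Fin n, (if i = j then 0 else mm))
          = (n:ℝ) * mm - mm := by
        intro i
        have hjj : ∀ j : Fin n, (if i = j then 0 else mm) = mm - (if i = j then mm else 0) := by
          intro j; by_cases hj : i = j <;> simp [hj]
        rw [Finset.sum_congr rfl (fun j _ => hjj j), Finset.sum_sub_distrib,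
          Finset.sum_const, Finset.sum_ite_eq]
        simp [Finset.card_univ]
      calc ∑ p : Fin n × Fin n, (if p.1 = p.2 then 0 else h (w p.1) (w p.2) - mm)
          = ∑ p : Fin n × Fin n, (h (w p.1) (w p.2) - (if p.1 = p.2 then 0 else mm)) :=
            Finset.sum_congr rfl (fun p _ => hterm p)
        _ = (∑ p : Fin n × Fin n, h (w p.1) (w p.2))
            - ∑ p : Fin n × Fin n, (if p.1 = p.2 then 0 else mm) := Finset.sum_sub_distrib _ _
        _ = (∑ i : Fin n, ∑ j : Fin n, h (w i) (w j))
            - ∑ i : Fin n, ∑ j : Fin n, (if i = j then 0 else mm) := by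
            exact congrArg₂ (fun a b => a - b) (Fintype.sum_prod_type _)
              (Fintype.sum_prod_type _)
        _ = (∑ i : Fin n, ∑ j : Fin n, h (w i) (w j))
            - ∑ _i : Fin n, ((n:ℝ) * mm - mm) := by
            rw [Finset.sum_congr rfl (fun i _ => hinner i)]
        _ = (∑ i : Fin n, ∑ j : Fin n, h (w i) (w j)) - ((n:ℝ)^2 - n) * mm := by
            rw [Finset.sum_const]
            simp only [Finset.card_univ, Fintype.card_fin, nsmul_eq_mul]
            ring
    have hs2 : SB z = (∑ i : Fin n, ∑ j : Fin n, h (z (Sum.inl i)) (z (Sum.inl j)))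
        - ((n:ℝ)^2 - n) * m2 := haux (fun i => z (Sum.inl i)) m2
    have hs3 : SC z = (∑ i : Fin n, ∑ j : Fin n, h (z (Sum.inr i)) (z (Sum.inr j)))
        - ((n:ℝ)^2 - n) * m3 := haux (fun i => z (Sum.inr i)) m3
    have hsum : ∑ i : Fin n, ∑ j : Fin n,
        (2 * h (z (Sum.inl i)) (z (Sum.inr j)) - h (z (Sum.inl i)) (z (Sum.inl j))
          - h (z (Sum.inr i)) (z (Sum.inr j)))
        = 2 * (∑ i : Fin n, ∑ j : Fin n, h (z (Sum.inl i)) (z (Sum.inr j)))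
          - (∑ i : Fin n, ∑ j : Fin n, h (z (Sum.inl i)) (z (Sum.inl j)))
          - (∑ i : Fin n, ∑ j : Fin n, h (z (Sum.inr i)) (z (Sum.inr j))) := by
      simp only [Finset.sum_sub_distrib, Finset.mul_sum]
    rw [hsum, hs1, hs2, hs3]
    field_simp
    ring
  -- measurability and bounds for the centered sums
  have hmz : ∀ (a b : Fin n ⊕ Fin n), Measurable (fun z : ι → E => h (z a) (z b)) := by
    intro a b
    have : Measurable (fun z : ι → E => Function.uncurry h (z a, z b)) :=
      hmeas.comp ((measurable_pi_apply a).prodMk (measurable_pi_apply b))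
    exact this
  have hSAm : Measurable SA := by
    rw [hSA]
    exact Finset.measurable_sum _ (fun p _ => (hmz _ _).sub measurable_const)
  have hSBm : Measurable SB := by
    rw [hSB]
    refine Finset.measurable_sum _ (fun p _ => ?_)
    by_cases hp : p.1 = p.2
    · simp only [if_pos hp]; exact measurable_const
    · simp only [if_neg hp]; exact (hmz _ _).sub measurable_const
  have hSCm : Measurable SC := by
    rw [hSC]
    refine Finset.measurable_sum _ (fun p _ => ?_)
    by_cases hp : p.1 = p.2
    · simp only [if_pos hp]; exact measurable_const
    · simp only [if_neg hp]; exact (hmz _ _).sub measurable_const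
  have hcard : ((Finset.univ : Finset (Fin n × Fin n)).card : ℝ) = (n:ℝ)^2 := by
    simp [Finset.card_univ]; push_cast; ring
  have hSAb : ∀ z, |SA z| ≤ (n:ℝ)^2 * (2*C) := by
    intro z
    calc |SA z| ≤ ∑ p : Fin n × Fin n, |h (z (Sum.inl p.1)) (z (Sum.inr p.2)) - m1| :=
          Finset.abs_sum_le_sum_abs _ _
      _ ≤ ∑ _p : Fin n × Fin n, (2*C) := by
          refine Finset.sum_le_sum (fun p _ => ?_)
          calc |h (z (Sum.inl p.1)) (z (Sum.inr p.2)) - m1|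
              ≤ |h (z (Sum.inl p.1)) (z (Sum.inr p.2))| + |m1| := abs_sub _ _
            _ ≤ C + C := add_le_add (hbd _ _) hm1C
            _ = 2*C := by ring
      _ = (n:ℝ)^2 * (2*C) := by rw [Finset.sum_const, nsmul_eq_mul, hcard]
  have hSb_gen : ∀ (z : ι → E) (u : Fin n → ι) (mm : ℝ), |mm| ≤ C →
      |∑ p : Fin n × Fin n, (if p.1 = p.2 then 0 else h (z (u p.1)) (z (u p.2)) - mm)|
        ≤ (n:ℝ)^2 * (2*C) := by
    intro z u mm hmm
    calc |∑ p : Fin n × Fin n, (if p.1 = p.2 then 0 else h (z (u p.1)) (z (u p.2)) - mm)|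
        ≤ ∑ p : Fin n × Fin n, |if p.1 = p.2 then 0 else h (z (u p.1)) (z (u p.2)) - mm| :=
          Finset.abs_sum_le_sum_abs _ _
      _ ≤ ∑ _p : Fin n × Fin n, (2*C) := by
          refine Finset.sum_le_sum (fun p _ => ?_)
          by_cases hp : p.1 = p.2
          · simp only [if_pos hp, abs_zero]; linarith
          · simp only [if_neg hp]
            calc |h (z (u p.1)) (z (u p.2)) - mm|
                ≤ |h (z (u p.1)) (z (u p.2))| + |mm| := abs_sub _ _
              _ ≤ C + C := add_le_add (hbd _ _) hmm
              _ = 2*C := by ring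
      _ = (n:ℝ)^2 * (2*C) := by rw [Finset.sum_const, nsmul_eq_mul, hcard]
  have hSBb : ∀ z, |SB z| ≤ (n:ℝ)^2 * (2*C) := fun z => hSb_gen z Sum.inl m2 hm2C
  have hSCb : ∀ z, |SC z| ≤ (n:ℝ)^2 * (2*C) := fun z => hSb_gen z Sum.inr m3 hm3C
  -- integrability of pieces
  have iSA : Integrable (fun z => |SA z|) (Measure.pi ν) :=
    (integrable_of_bdd hSAm.aestronglyMeasurable hSAb).abs
  have iSB : Integrable (fun z => |SB z|) (Measure.pi ν) :=
    (integrable_of_bdd hSBm.aestronglyMeasurable hSBb).abs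
  have iSC : Integrable (fun z => |SC z|) (Measure.pi ν) :=
    (integrable_of_bdd hSCm.aestronglyMeasurable hSCb).abs
  -- pointwise triangle inequality
  have hptle : ∀ z : ι → E,
      |(1 / (n : ℝ) ^ 2) * (2 * SA z - SB z - SC z) + (m2 + m3) / n|
      ≤ (1 / (n : ℝ) ^ 2) * (2 * |SA z| + |SB z| + |SC z|) + (|m2| + |m3|) / n := by
    intro z
    have t1 := abs_add_le ((1 / (n : ℝ) ^ 2) * (2 * SA z - SB z - SC z)) ((m2 + m3) / n)
    have t2 : |(1 / (n : ℝ) ^ 2) * (2 * SA z - SB z - SC z)|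
        = (1 / (n : ℝ) ^ 2) * |2 * SA z - SB z - SC z| := by
      rw [abs_mul, abs_of_nonneg (by positivity)]
    have t3 : |2 * SA z - SB z - SC z| ≤ 2 * |SA z| + |SB z| + |SC z| := by
      have u1 := abs_sub (2 * SA z - SB z) (SC z)
      have u2 := abs_sub (2 * SA z) (SB z)
      have u3 : |2 * SA z| = 2 * |SA z| := by rw [abs_mul]; norm_num
      linarith
    have t4 : |(m2 + m3) / n| ≤ (|m2| + |m3|) / n := by
      rw [abs_div, abs_of_nonneg (le_of_lt hn')]
      exact (div_le_div_iff_of_pos_right hn').mpr (abs_add_le m2 m3)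
    have hpos : (0:ℝ) ≤ 1 / (n : ℝ) ^ 2 := by positivity
    have t5 : (1 / (n : ℝ) ^ 2) * |2 * SA z - SB z - SC z|
        ≤ (1 / (n : ℝ) ^ 2) * (2 * |SA z| + |SB z| + |SC z|) :=
      mul_le_mul_of_nonneg_left t3 hpos
    linarith
  -- transfer to the pi measure and estimate
  have hint2 : Integrable (fun z => (1 / (n : ℝ) ^ 2) * (2 * |SA z| + |SB z| + |SC z|)
      + (|m2| + |m3|) / n) (Measure.pi ν) := by
    apply Integrable.add _ (integrable_const _)
    have j1 : Integrable (fun z => 2 * |SA z| + |SB z|) (Measure.pi ν) :=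
      (iSA.const_mul 2).add iSB
    have j2 : Integrable (fun z => 2 * |SA z| + |SB z| + |SC z|) (Measure.pi ν) := j1.add iSC
    exact j2.const_mul _
  have hint1 : Integrable (fun z =>
      |(1 / (n : ℝ) ^ 2) * (2 * SA z - SB z - SC z) + (m2 + m3) / n|) (Measure.pi ν) := by
    refine integrable_of_bdd ?_ (M := (1 / (n : ℝ) ^ 2)
      * (2 * ((n:ℝ)^2 * (2*C)) + (n:ℝ)^2 * (2*C) + (n:ℝ)^2 * (2*C)) + (|m2| + |m3|) / n) ?_
    · refine (Measurable.abs ?_).aestronglyMeasurable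
      exact ((((hSAm.const_mul 2).sub hSBm).sub hSCm).const_mul _).add measurable_const
    · intro z
      rw [abs_abs]
      have := hptle z
      have hpos : (0:ℝ) ≤ 1 / (n : ℝ) ^ 2 := by positivity
      have b1 := hSAb z
      have b2 := hSBb z
      have b3 := hSCb z
      have habs1 : 0 ≤ |SA z| := abs_nonneg _
      have habs2 : 0 ≤ |SB z| := abs_nonneg _
      have habs3 : 0 ≤ |SC z| := abs_nonneg _
      nlinarith [mul_le_mul_of_nonneg_left b1 hpos, mul_le_mul_of_nonneg_left b2 hpos,
        mul_le_mul_of_nonneg_left b3 hpos]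
  have bA : ∫ z, |SA z| ∂Measure.pi ν ≤ 2 * C * n * Real.sqrt n :=
    two_sample_bound ν Sum.inl Sum.inr Sum.inl_injective Sum.inr_injective
      (fun i j => by simp) P Q (fun i => rfl) (fun j => rfl) h hmeas hC0 hbd hm1'
  have bB : ∫ z, |SB z| ∂Measure.pi ν ≤ 3 * C * n * Real.sqrt n :=
    one_sample_bound ν Sum.inl Sum.inl_injective P (fun i => rfl) h hmeas hC0 hbd hm2'
  have bC : ∫ z, |SC z| ∂Measure.pi ν ≤ 3 * C * n * Real.sqrt n :=
    one_sample_bound ν Sum.inr Sum.inr_injective Q (fun j => rfl) h hmeas hC0 hbd hm3'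
  -- final arithmetic facts
  have hs0 : 0 < Real.sqrt n := Real.sqrt_pos.mpr hn'
  have hs1 : 1 ≤ Real.sqrt n := by
    rw [show (1:ℝ) = Real.sqrt 1 by rw [Real.sqrt_one]]
    exact Real.sqrt_le_sqrt (by exact_mod_cast hn)
  have hs2n : Real.sqrt n ^ 2 = (n:ℝ) := Real.sq_sqrt (le_of_lt hn')
  have hpi15 : (3/2 : ℝ) ≤ Real.sqrt Real.pi := by
    nlinarith [Real.sq_sqrt Real.pi_pos.le, Real.sqrt_nonneg Real.pi, Real.pi_gt_three]
  calc ∫ xy : (Fin n → EuclideanSpace ℝ (Fin d)) × (Fin n → EuclideanSpace ℝ (Fin d)),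
        |(1 / (n : ℝ) ^ 2) * ∑ i : Fin n, ∑ j : Fin n,
            (2 * h (xy.1 i) (xy.2 j) - h (xy.1 i) (xy.1 j) - h (xy.2 i) (xy.2 j))
          - (2 * m1 - m2 - m3)|
        ∂((Measure.pi fun _ : Fin n => P).prod (Measure.pi fun _ : Fin n => Q))
      = ∫ z, |(1 / (n : ℝ) ^ 2) * (2 * SA z - SB z - SC z) + (m2 + m3) / n|
          ∂Measure.pi ν := by
        rw [← hmp.integral_comp e.measurableEmbedding]
        exact integral_congr_ae (Filter.EventuallyEq.of_eq (funext fun z =>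
          congrArg abs (hpt z)))
    _ ≤ ∫ z, ((1 / (n : ℝ) ^ 2) * (2 * |SA z| + |SB z| + |SC z|) + (|m2| + |m3|) / n)
          ∂Measure.pi ν := integral_mono hint1 hint2 hptle
    _ = (1 / (n : ℝ) ^ 2) * (2 * (∫ z, |SA z| ∂Measure.pi ν) + (∫ z, |SB z| ∂Measure.pi ν)
          + (∫ z, |SC z| ∂Measure.pi ν)) + (|m2| + |m3|) / n := by
        have j1 : Integrable (fun z => 2 * |SA z| + |SB z|) (Measure.pi ν) :=
          (iSA.const_mul 2).add iSB
        have j2 : Integrable (fun z => 2 * |SA z| + |SB z| + |SC z|) (Measure.pi ν) :=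
          j1.add iSC
        rw [integral_add (j2.const_mul _) (integrable_const _), integral_const,
          integral_const_mul, integral_add j1 iSC, integral_add (iSA.const_mul 2) iSB,
          integral_const_mul]
        simp
    _ ≤ (1 / (n : ℝ) ^ 2) * (2 * (2 * C * n * Real.sqrt n) + 3 * C * n * Real.sqrt n
          + 3 * C * n * Real.sqrt n) + (C + C) / n := by
        have hpos : (0:ℝ) ≤ 1 / (n : ℝ) ^ 2 := by positivity
        have step : 2 * (∫ z, |SA z| ∂Measure.pi ν) + (∫ z, |SB z| ∂Measure.pi ν)
            + (∫ z, |SC z| ∂Measure.pi ν)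
            ≤ 2 * (2 * C * n * Real.sqrt n) + 3 * C * n * Real.sqrt n
              + 3 * C * n * Real.sqrt n := by linarith
        have step2 := mul_le_mul_of_nonneg_left step hpos
        have step3 : (|m2| + |m3|) / n ≤ (C + C) / n :=
          (div_le_div_iff_of_pos_right hn').mpr (add_le_add hm2C hm3C)
        linarith
    _ ≤ 8 * C * Real.sqrt (Real.pi / n) := by
        rw [Real.sqrt_div Real.pi_pos.le]
        have e1 : (1 / (n : ℝ) ^ 2) * (2 * (2 * C * n * Real.sqrt n) + 3 * C * n * Real.sqrt n
            + 3 * C * n * Real.sqrt n) + (C + C) / n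
            = (10 * C * Real.sqrt n + 2 * C) / n := by
          field_simp
          ring
        rw [e1, show (8:ℝ) * C * (Real.sqrt Real.pi / Real.sqrt n)
          = (8 * C * Real.sqrt Real.pi) / Real.sqrt n from by ring,
          div_le_div_iff₀ hn' hs0]
        have hss : Real.sqrt n * Real.sqrt n = (n:ℝ) := Real.mul_self_sqrt hn'.le
        nlinarith [mul_nonneg (mul_nonneg (sub_nonneg.mpr hpi15) hC0) hn'.le,
          mul_nonneg (mul_nonneg (sub_nonneg.mpr hs1) hC0) hs0.le, hss,
          mul_nonneg hC0 hs0.le]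
end

section
/- Let f, f', g, g' be functions bounded in absolute value by L on the relevant sample points and let the pairwise costs satisfy 0 ≤ (1/2)‖X_i − Y_j‖² ≤ 2r². Then the empirical entropic dual objective Φ_n(f,g) = (1/n)∑[f(X_i)+g(Y_i)] − (ε/n²)∑_{i,j} exp((1/ε)[f(X_i)+g(Y_j)−(1/2)‖X_i−Y_j‖²]) + ε is δ-strongly concave along the segment between (f,g) and (f',g'), with δ = exp(−(2L+2r²)/ε)/ε, with respect to the norm ‖·‖²_{L²(Pⁿ)×L²(Qⁿ)}, provided that g and g' both have empirical mean zero on the Y samples. -/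
open MeasureTheory Finset

/-- Strong concavity of the empirical entropic dual objective. With samples
`X i, Y j ∈ B(0,r)`, potentials (given by their values on the samples) bounded by `L` and
with empirical mean zero on the `Y` samples, the function
`h(t) = Φₙ((1−t)f + tf', (1−t)g + tg')` satisfies
`h''(t) ≤ −δ (‖f−f'‖²_{L²(Pⁿ)} + ‖g−g'‖²_{L²(Qⁿ)})` for `t ∈ [0,1]`, where
`δ = exp(−(2L+2r²)/ε)/ε`. -/
theorem empirical_dual_strong_concavity {d : ℕ} (n : ℕ) (hn : 0 < n) (r ε L : ℝ)
    (hr : 0 < r) (hε : 0 < ε) (hL : 0 ≤ L)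
    (X Y : Fin n → EuclideanSpace ℝ (Fin d))
    (hX : ∀ i, X i ∈ Metric.closedBall (0 : EuclideanSpace ℝ (Fin d)) r)
    (hY : ∀ j, Y j ∈ Metric.closedBall (0 : EuclideanSpace ℝ (Fin d)) r)
    (f f' g g' : Fin n → ℝ)
    (hf : ∀ i, |f i| ≤ L) (hf' : ∀ i, |f' i| ≤ L)
    (hg : ∀ j, |g j| ≤ L) (hg' : ∀ j, |g' j| ≤ L)
    (hg0 : ∑ j, g j = 0) (hg'0 : ∑ j, g' j = 0)
    (Φ : (Fin n → ℝ) → (Fin n → ℝ) → ℝ)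
    (hΦ : ∀ u v, Φ u v = (1 / (n : ℝ)) * ∑ i, (u i + v i)
        - (ε / (n : ℝ) ^ 2) * ∑ i, ∑ j,
            Real.exp ((u i + v j - ‖X i - Y j‖ ^ 2 / 2) / ε) + ε) :
    ∀ t ∈ Set.Icc (0 : ℝ) 1,
      deriv (deriv (fun s : ℝ =>
          Φ (fun i => (1 - s) * f i + s * f' i) (fun j => (1 - s) * g j + s * g' j))) t
        ≤ -(Real.exp (-(2 * L + 2 * r ^ 2) / ε) / ε) *
            ((1 / (n : ℝ)) * ∑ i, (f i - f' i) ^ 2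
              + (1 / (n : ℝ)) * ∑ j, (g j - g' j) ^ 2) := by
  intro t ht
  have hnR : (0:ℝ) < (n:ℝ) := by exact_mod_cast hn
  set a : Fin n → Fin n → ℝ := fun i j => (f i + g j - ‖X i - Y j‖ ^ 2 / 2) / ε with ha
  set b : Fin n → Fin n → ℝ := fun i j => ((f' i - f i) + (g' j - g j)) / ε with hb
  set C0 : ℝ := (1 / (n:ℝ)) * ∑ i, (f i + g i) with hC0
  set C1 : ℝ := (1 / (n:ℝ)) * ∑ i, ((f' i - f i) + (g' i - g i)) with hC1
  have hfun : (fun s : ℝ => Φ (fun i => (1 - s) * f i + s * f' i)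
      (fun j => (1 - s) * g j + s * g' j))
      = fun s => (C0 + s * C1)
          - (ε / (n:ℝ)^2) * ∑ i, ∑ j, Real.exp (a i j + s * b i j) + ε := by
    funext s
    simp only [hΦ]
    have h1 : ∑ i, ((1 - s) * f i + s * f' i + ((1 - s) * g i + s * g' i))
        = ∑ i, (f i + g i) + s * ∑ i, ((f' i - f i) + (g' i - g i)) := by
      rw [Finset.mul_sum, ← Finset.sum_add_distrib]
      exact Finset.sum_congr rfl fun i _ => by ring
    have h3 : ∑ i, ∑ j, Real.exp (((1 - s) * f i + s * f' i + ((1 - s) * g j + s * g' j)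
          - ‖X i - Y j‖ ^ 2 / 2) / ε)
        = ∑ i, ∑ j, Real.exp (a i j + s * b i j) :=
      Finset.sum_congr rfl fun i _ => Finset.sum_congr rfl fun j _ => by
        simp only [ha, hb]; ring_nf
    rw [h1, h3, hC0, hC1]
    ring
  -- first derivative
  set h1fun : ℝ → ℝ := fun s =>
    C1 - (ε / (n:ℝ)^2) * ∑ i, ∑ j, Real.exp (a i j + s * b i j) * b i j with hh1
  have HD1 : ∀ s : ℝ, HasDerivAt (fun s => (C0 + s * C1)
      - (ε / (n:ℝ)^2) * ∑ i, ∑ j, Real.exp (a i j + s * b i j) + ε) (h1fun s) s := by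
    intro s
    have hS : HasDerivAt (fun s : ℝ => ∑ i, ∑ j, Real.exp (a i j + s * b i j))
        (∑ i, ∑ j, Real.exp (a i j + s * b i j) * b i j) s :=
      HasDerivAt.fun_sum fun i _ => HasDerivAt.fun_sum fun j _ =>
        (((hasDerivAt_mul_const (b i j)).const_add (a i j)).exp)
    exact (((hasDerivAt_mul_const C1).const_add C0).sub
      (hS.const_mul (ε / (n:ℝ)^2))).add_const ε
  have HD2 : HasDerivAt h1fun
      (-((ε / (n:ℝ)^2) * ∑ i, ∑ j, Real.exp (a i j + t * b i j) * b i j * b i j)) t := by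
    have hS : HasDerivAt (fun s : ℝ => ∑ i, ∑ j, Real.exp (a i j + s * b i j) * b i j)
        (∑ i, ∑ j, Real.exp (a i j + t * b i j) * b i j * b i j) t :=
      HasDerivAt.fun_sum fun i _ => HasDerivAt.fun_sum fun j _ =>
        (((hasDerivAt_mul_const (b i j)).const_add (a i j)).exp).mul_const (b i j)
    exact (hS.const_mul (ε / (n:ℝ)^2)).const_sub C1
  rw [hfun]
  have e1 : deriv (fun s : ℝ => (C0 + s * C1)
      - (ε / (n:ℝ)^2) * ∑ i, ∑ j, Real.exp (a i j + s * b i j) + ε) = h1fun :=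
    funext fun s => (HD1 s).deriv
  rw [e1, HD2.deriv]
  -- now the inequality
  set E : ℝ := Real.exp (-(2 * L + 2 * r ^ 2) / ε) with hE
  have hcb : ∀ i j, ‖X i - Y j‖ ^ 2 / 2 ≤ 2 * r ^ 2 := by
    intro i j
    have h1 : ‖X i‖ ≤ r := by simpa [mem_closedBall_zero_iff] using hX i
    have h2 : ‖Y j‖ ≤ r := by simpa [mem_closedBall_zero_iff] using hY j
    have h3 : ‖X i - Y j‖ ≤ 2 * r := by
      calc ‖X i - Y j‖ ≤ ‖X i‖ + ‖Y j‖ := norm_sub_le _ _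
        _ ≤ 2 * r := by linarith
    nlinarith [norm_nonneg (X i - Y j)]
  have hEle : ∀ i j, E ≤ Real.exp (a i j + t * b i j) := by
    intro i j
    rw [hE]
    apply Real.exp_le_exp.mpr
    have harg : a i j + t * b i j
        = ((1 - t) * f i + t * f' i + ((1 - t) * g j + t * g' j) - ‖X i - Y j‖ ^ 2 / 2) / ε := by
      simp only [ha, hb]; ring
    rw [harg]
    rw [div_le_div_iff₀ hε hε]
    have hft := abs_le.mp (hf i)
    have hf't := abs_le.mp (hf' i)
    have hgt := abs_le.mp (hg j)
    have hg't := abs_le.mp (hg' j)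
    have p1 : 0 ≤ (1 - t) * (f i + L) := mul_nonneg (by linarith [ht.2]) (by linarith [hft.1])
    have p2 : 0 ≤ t * (f' i + L) := mul_nonneg ht.1 (by linarith [hf't.1])
    have p3 : 0 ≤ (1 - t) * (g j + L) := mul_nonneg (by linarith [ht.2]) (by linarith [hgt.1])
    have p4 : 0 ≤ t * (g' j + L) := mul_nonneg ht.1 (by linarith [hg't.1])
    nlinarith [hcb i j]
  -- sum identity
  have hΔg : ∑ j, (g' j - g j) = 0 := by
    rw [Finset.sum_sub_distrib, hg0, hg'0]; ring
  have key : ∑ i, ∑ j, (b i j)^2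
      = ((n:ℝ) * ∑ i, (f i - f' i)^2 + (n:ℝ) * ∑ j, (g j - g' j)^2) / ε^2 := by
    have inner : ∀ i : Fin n, ∑ j, (b i j)^2
        = (n:ℝ) * ((f i - f' i)^2 / ε^2) + ∑ j, (g j - g' j)^2 / ε^2 := by
      intro i
      have e : ∀ j, (b i j)^2 = (f i - f' i)^2 / ε^2 + (g j - g' j)^2 / ε^2
          + (2 * (f' i - f i) / ε^2) * (g' j - g j) := fun j => by
        simp only [hb]; ring
      rw [Finset.sum_congr rfl fun j _ => e j]
      rw [Finset.sum_add_distrib, Finset.sum_add_distrib, Finset.sum_const,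
        ← Finset.mul_sum, hΔg, mul_zero, add_zero, Finset.card_univ, Fintype.card_fin,
        nsmul_eq_mul]
    rw [Finset.sum_congr rfl fun i _ => inner i, Finset.sum_add_distrib,
      Finset.sum_const, Finset.card_univ, Fintype.card_fin, nsmul_eq_mul,
      ← Finset.mul_sum]
    rw [← Finset.sum_div, ← Finset.sum_div]
    field_simp
  have step : E * ∑ i, ∑ j, (b i j)^2
      ≤ ∑ i, ∑ j, Real.exp (a i j + t * b i j) * b i j * b i j := by
    rw [Finset.mul_sum]
    refine Finset.sum_le_sum fun i _ => ?_
    rw [Finset.mul_sum]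
    refine Finset.sum_le_sum fun j _ => ?_
    nlinarith [hEle i j, sq_nonneg (b i j)]
  have hfinal : -((ε / (n:ℝ)^2) * ∑ i, ∑ j, Real.exp (a i j + t * b i j) * b i j * b i j)
      ≤ -((ε / (n:ℝ)^2) * (E * ∑ i, ∑ j, (b i j)^2)) := by
    apply neg_le_neg
    exact mul_le_mul_of_nonneg_left step (by positivity)
  refine hfinal.trans_eq ?_
  rw [key]
  field_simp
end
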